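/- Let U be uniformly distributed on the unit sphere in R^d, let A and A* be d×d real matrices, and let R and R* be positive integrable random variables independent of U. Then the elliptically distributed random vectors ξ = R·(AU) and ξ* = R*·(A*U) are zonoid equivalent if and only if (ER)² A Aᵀ = (ER*)² A*(A*)ᵀ. -/

import Mathlib

open MeasureTheory ProbabilityTheory

open Matrix Finset

section ZEaux
set_option linter.unusedSectionVars false

variable {d : ℕ}

lemma ZE.cauchy (v w : Fin d → ℝ) :
    |v ⬝ᵥ w| ≤ Real.sqrt (∑ i, v i ^ 2) * Real.sqrt (∑ i, w i ^ 2) := by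
  have h := Finset.sum_mul_sq_le_sq_mul_sq Finset.univ v w
  have h2 : |v ⬝ᵥ w| = Real.sqrt ((∑ i, v i * w i) ^ 2) := by
    rw [Real.sqrt_sq_eq_abs]; rfl
  rw [h2, ← Real.sqrt_mul (by positivity)]
  exact Real.sqrt_le_sqrt h

lemma ZE.vecMulVec_mul (n : Fin d → ℝ) :
    vecMulVec n n * vecMulVec n n = (n ⬝ᵥ n) • vecMulVec n n := by
  ext i j
  simp [Matrix.mul_apply, vecMulVec_apply, dotProduct, Matrix.smul_apply,
    Finset.sum_mul, Finset.mul_sum]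
  ring_nf
  exact Finset.sum_congr rfl fun k _ => by ring

lemma ZE.vecMulVec_transpose (n : Fin d → ℝ) :
    (vecMulVec n n)ᵀ = vecMulVec n n := by
  ext i j; simp [vecMulVec_apply, Matrix.transpose_apply, mul_comm]

lemma ZE.vecMulVec_mulVec (n v : Fin d → ℝ) :
    (vecMulVec n n).mulVec v = (n ⬝ᵥ v) • n := by
  ext i
  simp [Matrix.mulVec, vecMulVec_apply, dotProduct, Finset.mul_sum, Finset.sum_mul]
  exact Finset.sum_congr rfl fun k _ => by ring

lemma ZE.householder (v w : Fin d → ℝ) (hv : ∑ i, v i ^ 2 = 1) (hw : ∑ i, w i ^ 2 = 1) :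
    ∃ O : Matrix (Fin d) (Fin d) ℝ, O * Oᵀ = 1 ∧ Oᵀ.mulVec w = v := by
  by_cases hvw : v = w
  · exact ⟨1, by simp, by simp [hvw]⟩
  set n : Fin d → ℝ := v - w with hn
  have hnn : n ⬝ᵥ n = 2 - 2 * (v ⬝ᵥ w) := by
    simp only [hn, dotProduct, Pi.sub_apply]
    have : ∀ i, (v i - w i) * (v i - w i) = v i ^2 + w i ^2 - 2 * (v i * w i) := by
      intro i; ring
    simp only [this, Finset.sum_sub_distrib, Finset.sum_add_distrib, hv, hw,
      ← Finset.mul_sum]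
    ring
  have hnv : n ⬝ᵥ v = 1 - v ⬝ᵥ w := by
    simp only [hn, dotProduct, Pi.sub_apply, sub_mul, Finset.sum_sub_distrib]
    have : ∑ i, v i * v i = 1 := by rw [← hv]; exact Finset.sum_congr rfl fun i _ => (sq (v i)).symm
    rw [this]
    congr 1
    exact Finset.sum_congr rfl fun i _ => mul_comm _ _
  have hne : n ≠ 0 := sub_ne_zero.mpr hvw
  have hpos : 0 < n ⬝ᵥ n := by
    have : n ⬝ᵥ n = ∑ i, n i ^ 2 := Finset.sum_congr rfl fun i _ => (sq (n i)).symm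
    rw [this]
    rcases Function.ne_iff.mp hne with ⟨i, hi⟩
    refine Finset.sum_pos' (fun j _ => sq_nonneg _) ⟨i, Finset.mem_univ i, ?_⟩
    simpa [sq_pos_iff] using hi
  set c : ℝ := 2 / (n ⬝ᵥ n) with hc
  set O : Matrix (Fin d) (Fin d) ℝ := 1 - c • vecMulVec n n with hO
  have hOsym : Oᵀ = O := by
    rw [hO, transpose_sub, transpose_one, transpose_smul, ZE.vecMulVec_transpose]
  have hOmul : O * Oᵀ = 1 := by
    rw [hOsym, hO]
    rw [sub_mul, mul_sub, mul_sub, one_mul, mul_one]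
    simp only [Matrix.smul_mul, Matrix.mul_smul, one_mul, mul_one, ZE.vecMulVec_mul,
      smul_smul]
    have : c * (c * (n ⬝ᵥ n)) = 2 * c := by
      rw [hc, div_mul_cancel₀ _ hpos.ne']; ring
    rw [this]
    module
  refine ⟨O, hOmul, ?_⟩
  rw [hOsym, hO]
  rw [Matrix.sub_mulVec, Matrix.one_mulVec, Matrix.smul_mulVec, ZE.vecMulVec_mulVec]
  have hnw : n ⬝ᵥ w = (v ⬝ᵥ w) - 1 := by
    simp only [hn, dotProduct, Pi.sub_apply, sub_mul, Finset.sum_sub_distrib]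
    have : ∑ i, w i * w i = 1 := by rw [← hw]; exact Finset.sum_congr rfl fun i _ => (sq (w i)).symm
    rw [this]
  have hfac : c * (n ⬝ᵥ w) = -1 := by
    rw [hc, hnw]
    rw [hnn]
    have h2 : (2:ℝ) - 2 * (v ⬝ᵥ w) ≠ 0 := by rw [← hnn]; exact ne_of_gt hpos
    rw [div_mul_eq_mul_div, div_eq_iff h2]
    ring
  rw [smul_smul, hfac]
  ext i
  simp only [Pi.sub_apply, Pi.smul_apply, smul_smul, hfac, smul_eq_mul, neg_one_mul, hn]
  ring

set_option linter.unusedSectionVars false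

lemma ZE.sqrt_le_sum_abs (v : Fin d → ℝ) :
    Real.sqrt (∑ i, v i ^ 2) ≤ ∑ i, |v i| := by
  have h1 : ∑ i, v i ^ 2 ≤ (∑ i, |v i|) ^ 2 := by
    have := Finset.sum_sq_le_sq_sum_of_nonneg (f := fun i => |v i|)
      (s := Finset.univ) (fun i _ => abs_nonneg _)
    simpa [sq_abs] using this
  calc Real.sqrt (∑ i, v i ^ 2) ≤ Real.sqrt ((∑ i, |v i|) ^ 2) := Real.sqrt_le_sqrt h1
    _ = ∑ i, |v i| := Real.sqrt_sq (by positivity)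

lemma ZE.sum_single_sq (i₀ : Fin d) : ∑ i, (Pi.single i₀ 1 : Fin d → ℝ) i ^ 2 = 1 := by
  simp [Pi.single_apply, sq]

variable {Ω : Type*} [MeasureSpace Ω] [IsProbabilityMeasure (ℙ : Measure Ω)]

lemma ZE.meas_dot (U : Ω → Fin d → ℝ) (hUm : Measurable U) (v : Fin d → ℝ) :
    Measurable (fun ω => v ⬝ᵥ U ω) := by
  unfold dotProduct
  exact Finset.measurable_sum _ fun i _ =>
    measurable_const.mul ((measurable_pi_apply i).comp hUm)

lemma ZE.int_dot (U : Ω → Fin d → ℝ) (hUm : Measurable U)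
    (hUsph : ∀ᵐ ω, ∑ i, U ω i ^ 2 = 1) (v : Fin d → ℝ) :
    Integrable (fun ω => |v ⬝ᵥ U ω|) := by
  refine (integrable_const (Real.sqrt (∑ i, v i ^ 2))).mono'
    ((ZE.meas_dot U hUm v).abs.aestronglyMeasurable) ?_
  filter_upwards [hUsph] with ω h
  have := ZE.cauchy v (U ω)
  rw [h, Real.sqrt_one, mul_one] at this
  simpa using this

lemma ZE.rot_inv (U : Ω → Fin d → ℝ) (hUm : Measurable U)
    (hUrot : ∀ O : Matrix (Fin d) (Fin d) ℝ, O * O.transpose = 1 →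
      Measure.map (fun ω => O.mulVec (U ω)) ℙ = Measure.map U ℙ)
    (O : Matrix (Fin d) (Fin d) ℝ) (hO : O * Oᵀ = 1) (x : Fin d → ℝ) :
    ∫ ω, |x ⬝ᵥ O.mulVec (U ω)| = ∫ ω, |x ⬝ᵥ U ω| := by
  have hOU : Measurable (fun ω => O.mulVec (U ω)) := by
    refine measurable_pi_lambda _ fun i => ?_
    exact ZE.meas_dot U hUm (O i)
  have hf : Measurable (fun y : Fin d → ℝ => |x ⬝ᵥ y|) := by
    unfold dotProduct
    exact (Finset.measurable_sum _ fun i _ =>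
      measurable_const.mul (measurable_pi_apply i)).abs
  calc ∫ ω, |x ⬝ᵥ O.mulVec (U ω)|
      = ∫ y, |x ⬝ᵥ y| ∂(Measure.map (fun ω => O.mulVec (U ω)) ℙ) :=
        (integral_map hOU.aemeasurable hf.aestronglyMeasurable).symm
    _ = ∫ y, |x ⬝ᵥ y| ∂(Measure.map U ℙ) := by rw [hUrot O hO]
    _ = ∫ ω, |x ⬝ᵥ U ω| := integral_map hUm.aemeasurable hf.aestronglyMeasurable

lemma ZE.f_unit (U : Ω → Fin d → ℝ) (hUm : Measurable U)
    (hUrot : ∀ O : Matrix (Fin d) (Fin d) ℝ, O * O.transpose = 1 →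
      Measure.map (fun ω => O.mulVec (U ω)) ℙ = Measure.map U ℙ)
    (v w : Fin d → ℝ) (hv : ∑ i, v i ^ 2 = 1) (hw : ∑ i, w i ^ 2 = 1) :
    ∫ ω, |v ⬝ᵥ U ω| = ∫ ω, |w ⬝ᵥ U ω| := by
  obtain ⟨O, hO, hOv⟩ := ZE.householder v w hv hw
  have := ZE.rot_inv U hUm hUrot O hO w
  calc ∫ ω, |v ⬝ᵥ U ω| = ∫ ω, |(Oᵀ.mulVec w) ⬝ᵥ U ω| := by rw [hOv]
    _ = ∫ ω, |w ⬝ᵥ O.mulVec (U ω)| := by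
        congr 1; ext ω
        rw [Matrix.dotProduct_mulVec, Matrix.mulVec_transpose]
    _ = ∫ ω, |w ⬝ᵥ U ω| := this

lemma ZE.f_eq (U : Ω → Fin d → ℝ) (hUm : Measurable U)
    (hUrot : ∀ O : Matrix (Fin d) (Fin d) ℝ, O * O.transpose = 1 →
      Measure.map (fun ω => O.mulVec (U ω)) ℙ = Measure.map U ℙ)
    (i₀ : Fin d) (v : Fin d → ℝ) :
    ∫ ω, |v ⬝ᵥ U ω| = Real.sqrt (∑ i, v i ^ 2) * ∫ ω, |U ω i₀| := by
  by_cases hv : v = 0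
  · simp [hv]
  · set s : ℝ := Real.sqrt (∑ i, v i ^ 2) with hs
    have hsum_pos : 0 < ∑ i, v i ^ 2 := by
      rcases Function.ne_iff.mp hv with ⟨i, hi⟩
      refine Finset.sum_pos' (fun j _ => sq_nonneg _) ⟨i, Finset.mem_univ i, ?_⟩
      simpa [sq_pos_iff] using hi
    have hspos : 0 < s := Real.sqrt_pos.mpr hsum_pos
    set w : Fin d → ℝ := s⁻¹ • v with hwdef
    have hw : ∑ i, w i ^ 2 = 1 := by
      simp only [hwdef, Pi.smul_apply, smul_eq_mul, mul_pow, ← Finset.mul_sum]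
      have hs2 : s ^ 2 = ∑ i, v i ^ 2 := Real.sq_sqrt hsum_pos.le
      rw [← hs2]
      field_simp
    have hunit := ZE.f_unit U hUm hUrot w (Pi.single i₀ 1) hw (ZE.sum_single_sq i₀)
    have hsingle : ∀ y : Fin d → ℝ, (Pi.single i₀ 1 : Fin d → ℝ) ⬝ᵥ y = y i₀ := by
      intro y; rw [single_dotProduct, one_mul]
    have hv_eq : ∀ y : Fin d → ℝ, |v ⬝ᵥ y| = s * |w ⬝ᵥ y| := by
      intro y
      have : v = s • w := by
        rw [hwdef, smul_smul, mul_inv_cancel₀ hspos.ne', one_smul]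
      rw [this, smul_dotProduct, smul_eq_mul, abs_mul, abs_of_pos hspos]
    calc ∫ ω, |v ⬝ᵥ U ω| = ∫ ω, s * |w ⬝ᵥ U ω| := by simp only [hv_eq]
      _ = s * ∫ ω, |w ⬝ᵥ U ω| := integral_const_mul s _
      _ = s * ∫ ω, |U ω i₀| := by rw [hunit]; simp only [hsingle]
lemma ZE.int_sqrt_one (U : Ω → Fin d → ℝ)
    (hUsph : ∀ᵐ ω, ∑ i, U ω i ^ 2 = 1) :
    ∫ ω, Real.sqrt (∑ i, U ω i ^ 2) = 1 := by
  have he : (fun ω => Real.sqrt (∑ i, U ω i ^ 2)) =ᵐ[ℙ] fun _ => (1:ℝ) := by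
    filter_upwards [hUsph] with ω h; rw [h, Real.sqrt_one]
  rw [integral_congr_ae he]; simp

lemma ZE.sqrt_int (U : Ω → Fin d → ℝ)
    (hUsph : ∀ᵐ ω, ∑ i, U ω i ^ 2 = 1) :
    Integrable (fun ω => Real.sqrt (∑ i, U ω i ^ 2)) := by
  refine (integrable_const (1:ℝ)).congr ?_
  filter_upwards [hUsph] with ω h; rw [h, Real.sqrt_one]

lemma ZE.abs_coord_int (U : Ω → Fin d → ℝ) (hUm : Measurable U)
    (hUsph : ∀ᵐ ω, ∑ i, U ω i ^ 2 = 1) (i : Fin d) :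
    Integrable (fun ω => |U ω i|) := by
  have := ZE.int_dot U hUm hUsph (Pi.single i 1)
  simpa [single_dotProduct] using this

lemma ZE.c_pos (U : Ω → Fin d → ℝ) (hUm : Measurable U)
    (hUsph : ∀ᵐ ω, ∑ i, U ω i ^ 2 = 1)
    (hUrot : ∀ O : Matrix (Fin d) (Fin d) ℝ, O * O.transpose = 1 →
      Measure.map (fun ω => O.mulVec (U ω)) ℙ = Measure.map U ℙ)
    (i₀ : Fin d) : 0 < ∫ ω, |U ω i₀| := by
  have hci : ∀ i : Fin d, ∫ ω, |U ω i| = ∫ ω, |U ω i₀| := by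
    intro i
    have h1 := ZE.f_eq U hUm hUrot i₀ (Pi.single i 1)
    rw [ZE.sum_single_sq, Real.sqrt_one, one_mul] at h1
    rw [← h1]
    congr 1; ext ω; rw [single_dotProduct, one_mul]
  have hmono : ∫ ω, Real.sqrt (∑ i, U ω i ^ 2) ≤ ∫ ω, ∑ i, |U ω i| :=
    integral_mono (ZE.sqrt_int U hUsph)
      (integrable_finset_sum _ fun i _ => ZE.abs_coord_int U hUm hUsph i)
      (fun ω => ZE.sqrt_le_sum_abs (U ω))
  rw [ZE.int_sqrt_one U hUsph,
    integral_finset_sum _ (fun i _ => ZE.abs_coord_int U hUm hUsph i)] at hmono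
  simp only [hci, Finset.sum_const, Finset.card_univ, Fintype.card_fin, nsmul_eq_mul] at hmono
  have hd : (0:ℝ) < d := by exact_mod_cast i₀.pos
  nlinarith

lemma ZE.c_eq {Ω Ω' : Type*} [MeasureSpace Ω] [MeasureSpace Ω']
    [IsProbabilityMeasure (ℙ : Measure Ω)] [IsProbabilityMeasure (ℙ : Measure Ω')]
    (U : Ω → Fin d → ℝ) (U' : Ω' → Fin d → ℝ)
    (hUm : Measurable U) (hU'm : Measurable U')
    (hUsph : ∀ᵐ ω, ∑ i, U ω i ^ 2 = 1) (hU'sph : ∀ᵐ ω, ∑ i, U' ω i ^ 2 = 1)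
    (hUrot : ∀ O : Matrix (Fin d) (Fin d) ℝ, O * O.transpose = 1 →
      Measure.map (fun ω => O.mulVec (U ω)) ℙ = Measure.map U ℙ)
    (hU'rot : ∀ O : Matrix (Fin d) (Fin d) ℝ, O * O.transpose = 1 →
      Measure.map (fun ω => O.mulVec (U' ω)) ℙ = Measure.map U' ℙ)
    (i₀ : Fin d) :
    ∫ ω, |U ω i₀| = ∫ ω', |U' ω' i₀| := by
  set μ := (ℙ : Measure Ω).prod (ℙ : Measure Ω') with hμ
  set F : Ω × Ω' → ℝ := fun p => |U p.1 ⬝ᵥ U' p.2| with hF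
  have hF_meas : Measurable F := by
    have : Measurable (fun p : Ω × Ω' => U p.1 ⬝ᵥ U' p.2) := by
      unfold dotProduct
      exact Finset.measurable_sum _ fun i _ =>
        ((measurable_pi_apply i).comp (hUm.comp measurable_fst)).mul
          ((measurable_pi_apply i).comp (hU'm.comp measurable_snd))
    exact this.abs
  have hg_int : Integrable
      (fun p : Ω × Ω' => Real.sqrt (∑ i, U p.1 i ^ 2) * Real.sqrt (∑ i, U' p.2 i ^ 2)) μ :=
    (ZE.sqrt_int U hUsph).mul_prod (ZE.sqrt_int U' hU'sph)
  have hF_int : Integrable F μ := by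
    refine hg_int.mono' hF_meas.aestronglyMeasurable (Filter.Eventually.of_forall fun p => ?_)
    simpa [hF, abs_abs] using ZE.cauchy (U p.1) (U' p.2)
  have h1 : ∫ p, F p ∂μ = ∫ ω' , |U' ω' i₀| := by
    rw [hμ, integral_prod F hF_int]
    have hin : ∀ ω : Ω, ∫ ω', F (ω, ω') =
        Real.sqrt (∑ i, U ω i ^ 2) * ∫ ω', |U' ω' i₀| := fun ω =>
      ZE.f_eq U' hU'm hU'rot i₀ (U ω)
    simp only [hin]
    rw [integral_mul_const, ZE.int_sqrt_one U hUsph, one_mul]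
  have h2 : ∫ p, F p ∂μ = ∫ ω, |U ω i₀| := by
    rw [hμ, integral_prod_symm F hF_int]
    have hin : ∀ ω' : Ω', ∫ ω, F (ω, ω') =
        Real.sqrt (∑ i, U' ω' i ^ 2) * ∫ ω, |U ω i₀| := by
      intro ω'
      have : ∀ ω, F (ω, ω') = |U' ω' ⬝ᵥ U ω| := by
        intro ω; rw [hF]; simp only []; rw [dotProduct_comm]
      simp only [this]
      exact ZE.f_eq U hUm hUrot i₀ (U' ω')
    simp only [hin]
    rw [integral_mul_const, ZE.int_sqrt_one U' hU'sph, one_mul]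
  rw [← h1, h2]
lemma ZE.quadform_AAt (A : Matrix (Fin d) (Fin d) ℝ) (u : Fin d → ℝ) :
    u ⬝ᵥ (A * Aᵀ).mulVec u = ∑ i, (Aᵀ.mulVec u) i ^ 2 := by
  rw [← Matrix.mulVec_mulVec, Matrix.dotProduct_mulVec, ← Matrix.mulVec_transpose]
  simp [dotProduct, sq]

lemma ZE.quadform_eq {M N : Matrix (Fin d) (Fin d) ℝ} (hM : Mᵀ = M) (hN : Nᵀ = N)
    (h : ∀ u, u ⬝ᵥ M.mulVec u = u ⬝ᵥ N.mulVec u) : M = N := by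
  have hdiag : ∀ i, M i i = N i i := by
    intro i
    have := h (Pi.single i 1)
    simpa [single_dotProduct, Matrix.mulVec_single] using this
  ext i j
  rcases eq_or_ne i j with hij | hij
  · subst hij; exact hdiag i
  · have h2 := h (Pi.single i 1 + Pi.single j 1)
    simp only [add_dotProduct, dotProduct_add, Matrix.mulVec_add,
      single_dotProduct, Matrix.mulVec_single_one, Matrix.col_apply, one_mul, mul_one, Pi.add_apply] at h2
    have hMs : M j i = M i j := by
      conv_lhs => rw [← hM, Matrix.transpose_apply]
    have hNs : N j i = N i j := by
      conv_lhs => rw [← hN, Matrix.transpose_apply]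
    have hdi := hdiag i
    have hdj := hdiag j
    linarith

lemma ZE.side (U : Ω → Fin d → ℝ) (hUm : Measurable U)
    (hUsph : ∀ᵐ ω, ∑ i, U ω i ^ 2 = 1)
    (hUrot : ∀ O : Matrix (Fin d) (Fin d) ℝ, O * O.transpose = 1 →
      Measure.map (fun ω => O.mulVec (U ω)) ℙ = Measure.map U ℙ)
    (R : Ω → ℝ) (hRpos : ∀ᵐ ω, 0 < R ω) (hRint : Integrable R)
    (hindep : IndepFun R U ℙ)
    (A : Matrix (Fin d) (Fin d) ℝ) (i₀ : Fin d) (u : Fin d → ℝ) :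
    ∫ ω, |∑ i, u i * (R ω * A.mulVec (U ω) i)| =
      (∫ ω, R ω) * (Real.sqrt (∑ i, (Aᵀ.mulVec u) i ^ 2) * ∫ ω, |U ω i₀|) := by
  set v : Fin d → ℝ := Aᵀ.mulVec u with hv
  have hptw : ∀ᵐ ω, |∑ i, u i * (R ω * A.mulVec (U ω) i)| = R ω * |v ⬝ᵥ U ω| := by
    filter_upwards [hRpos] with ω hR
    have h1 : ∑ i, u i * (R ω * A.mulVec (U ω) i) = R ω * (v ⬝ᵥ U ω) := by
      rw [show v ⬝ᵥ U ω = u ⬝ᵥ A.mulVec (U ω) by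
        rw [Matrix.dotProduct_mulVec, ← Matrix.mulVec_transpose]]
      simp only [dotProduct, Finset.mul_sum]
      exact Finset.sum_congr rfl fun i _ => by ring
    rw [h1, abs_mul, abs_of_pos hR]
  rw [integral_congr_ae hptw]
  have hφ : Measurable (fun y : Fin d → ℝ => |v ⬝ᵥ y|) := by
    unfold dotProduct
    exact (Finset.measurable_sum _ fun i _ =>
      measurable_const.mul (measurable_pi_apply i)).abs
  have hIndep2 : IndepFun R (fun ω => |v ⬝ᵥ U ω|) ℙ :=
    hindep.comp measurable_id hφ
  have hmul := hIndep2.integral_mul_eq_mul_integral hRint.aestronglyMeasurable (ZE.int_dot U hUm hUsph v).aestronglyMeasurable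
  have hshow : (fun ω => R ω * |v ⬝ᵥ U ω|) = R * fun ω => |v ⬝ᵥ U ω| := rfl
  rw [hshow, hmul, ZE.f_eq U hUm hUrot i₀ v]

end ZEaux

/-- **Proposition 6.5 (elliptical distributions).** Let `U` (resp. `U'`) be
uniformly distributed on the unit sphere of `ℝ^d` (characterised by `‖U‖ = 1` a.s.
and invariance of the law under all orthogonal matrices), let `R, R*` be positive
integrable random variables independent of `U, U'` respectively, and let `A, A*`
be `d×d` matrices. Then the elliptical vectors `ξ = R·(AU)` and `ξ* = R*·(A*U')`
are zonoid equivalent iff `(ER)² A Aᵀ = (ER*)² A*(A*)ᵀ`. -/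
theorem elliptical_zonoid_equiv_iff
    {d : ℕ} {Ω Ω' : Type*} [MeasureSpace Ω] [MeasureSpace Ω']
    [IsProbabilityMeasure (ℙ : Measure Ω)] [IsProbabilityMeasure (ℙ : Measure Ω')]
    (U : Ω → Fin d → ℝ) (U' : Ω' → Fin d → ℝ)
    (hUm : Measurable U) (hU'm : Measurable U')
    (hUsph : ∀ᵐ ω, ∑ i, U ω i ^ 2 = 1) (hU'sph : ∀ᵐ ω, ∑ i, U' ω i ^ 2 = 1)
    (hUrot : ∀ O : Matrix (Fin d) (Fin d) ℝ, O * O.transpose = 1 →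
      Measure.map (fun ω => O.mulVec (U ω)) ℙ = Measure.map U ℙ)
    (hU'rot : ∀ O : Matrix (Fin d) (Fin d) ℝ, O * O.transpose = 1 →
      Measure.map (fun ω => O.mulVec (U' ω)) ℙ = Measure.map U' ℙ)
    (R : Ω → ℝ) (R' : Ω' → ℝ) (hRm : Measurable R) (hR'm : Measurable R')
    (hRpos : ∀ᵐ ω, 0 < R ω) (hR'pos : ∀ᵐ ω, 0 < R' ω)
    (hRint : Integrable R) (hR'int : Integrable R')
    (hindep : IndepFun R U ℙ) (hindep' : IndepFun R' U' ℙ)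
    (A A' : Matrix (Fin d) (Fin d) ℝ) :
    (∀ u : Fin d → ℝ,
        ∫ ω, |∑ i, u i * (R ω * A.mulVec (U ω) i)| =
          ∫ ω, |∑ i, u i * (R' ω * A'.mulVec (U' ω) i)|) ↔
      (∫ ω, R ω) ^ 2 • (A * A.transpose) =
        (∫ ω, R' ω) ^ 2 • (A' * A'.transpose) := by
  rcases isEmpty_or_nonempty (Fin d) with hemp | hne
  · exfalso
    haveI : (ae (ℙ : Measure Ω)).NeBot :=
      ae_neBot.mpr (IsProbabilityMeasure.ne_zero _)
    simp only [Finset.univ_eq_empty, Finset.sum_empty] at hUsph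
    obtain ⟨ω, hω⟩ := hUsph.exists
    norm_num at hω
  obtain ⟨i₀⟩ := hne
  set c : ℝ := ∫ ω, |U ω i₀| with hcdef
  have hcc' : c = ∫ ω', |U' ω' i₀| :=
    ZE.c_eq U U' hUm hU'm hUsph hU'sph hUrot hU'rot i₀
  have hcpos : 0 < c := ZE.c_pos U hUm hUsph hUrot i₀
  have hL : ∀ u : Fin d → ℝ, ∫ ω, |∑ i, u i * (R ω * A.mulVec (U ω) i)| =
      (∫ ω, R ω) * (Real.sqrt (∑ i, (Aᵀ.mulVec u) i ^ 2) * c) := fun u =>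
    ZE.side U hUm hUsph hUrot R hRpos hRint hindep A i₀ u
  have hL' : ∀ u : Fin d → ℝ, ∫ ω, |∑ i, u i * (R' ω * A'.mulVec (U' ω) i)| =
      (∫ ω, R' ω) * (Real.sqrt (∑ i, (A'ᵀ.mulVec u) i ^ 2) * c) := by
    intro u
    rw [ZE.side U' hU'm hU'sph hU'rot R' hR'pos hR'int hindep' A' i₀ u, ← hcc']
  have hERnn : 0 ≤ ∫ ω, R ω :=
    integral_nonneg_of_ae (hRpos.mono fun ω h => h.le)
  have hER'nn : 0 ≤ ∫ ω, R' ω :=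
    integral_nonneg_of_ae (hR'pos.mono fun ω h => h.le)
  have hqnn : ∀ u : Fin d → ℝ, 0 ≤ ∑ i, (Aᵀ.mulVec u) i ^ 2 := fun u =>
    Finset.sum_nonneg fun i _ => sq_nonneg _
  have hq'nn : ∀ u : Fin d → ℝ, 0 ≤ ∑ i, (A'ᵀ.mulVec u) i ^ 2 := fun u =>
    Finset.sum_nonneg fun i _ => sq_nonneg _
  constructor
  · intro h
    refine ZE.quadform_eq ?_ ?_ ?_
    · rw [Matrix.transpose_smul, Matrix.transpose_mul, Matrix.transpose_transpose]
    · rw [Matrix.transpose_smul, Matrix.transpose_mul, Matrix.transpose_transpose]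
    · intro u
      have hu := h u
      rw [hL u, hL' u, ← mul_assoc, ← mul_assoc] at hu
      have h3 : (∫ ω, R ω) * Real.sqrt (∑ i, (Aᵀ.mulVec u) i ^ 2) =
          (∫ ω, R' ω) * Real.sqrt (∑ i, (A'ᵀ.mulVec u) i ^ 2) :=
        mul_right_cancel₀ hcpos.ne' hu
      have h4 := congrArg (fun x : ℝ => x ^ 2) h3
      simp only [mul_pow] at h4
      rw [Real.sq_sqrt (hqnn u), Real.sq_sqrt (hq'nn u)] at h4
      simp only [Matrix.smul_mulVec, dotProduct_smul, smul_eq_mul,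
        ZE.quadform_AAt]
      exact h4
  · intro h u
    rw [hL u, hL' u]
    have h4 : (∫ ω, R ω) ^ 2 * (∑ i, (Aᵀ.mulVec u) i ^ 2) =
        (∫ ω, R' ω) ^ 2 * (∑ i, (A'ᵀ.mulVec u) i ^ 2) := by
      have := congrArg (fun M : Matrix (Fin d) (Fin d) ℝ => u ⬝ᵥ M.mulVec u) h
      simpa only [Matrix.smul_mulVec, dotProduct_smul, smul_eq_mul,
        ZE.quadform_AAt] using this
    have h5 : (∫ ω, R ω) * Real.sqrt (∑ i, (Aᵀ.mulVec u) i ^ 2) =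
        (∫ ω, R' ω) * Real.sqrt (∑ i, (A'ᵀ.mulVec u) i ^ 2) := by
      have h6 := congrArg Real.sqrt h4
      rwa [Real.sqrt_mul (sq_nonneg _), Real.sqrt_mul (sq_nonneg _),
        Real.sqrt_sq hERnn, Real.sqrt_sq hER'nn] at h6
    rw [← mul_assoc, ← mul_assoc, h5]
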